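/- For every m ≥ 1 and every prime power q ≥ 3, there exists γ ∈ F_{q^{2m}} such that S = {u + u^q · γ : u ∈ F_{q^m}} is an m-dimensional Sidon space over F_q in F_{q^{2m}}. -/

import Mathlib

/-- An `F`-linear subspace `S` of `K` is a *Sidon space*. -/
def IsSidonSpace (F : Type*) {K : Type*} [Field F] [Field K] [Algebra F K]
    (S : Submodule F K) : Prop :=
  ∀ a b c d : K, a ∈ S → b ∈ S → c ∈ S → d ∈ S →
    a ≠ 0 → b ≠ 0 → c ≠ 0 → d ≠ 0 → a * b = c * d →
    ({Submodule.span F {a}, Submodule.span F {b}} : Set (Submodule F K)) =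
      {Submodule.span F {c}, Submodule.span F {d}}

/-- Any root of `X^Q - X` in `K` lies in the image of a subfield `F` with `Q` elements. -/
lemma mem_range_of_pow_card_eq {F K : Type*} [Field F] [Field K] [Fintype F] [Fintype K]
    [Algebra F K] {Q : ℕ} (hQ : Fintype.card F = Q) {x : K} (hx : x ^ Q = x) :
    x ∈ Set.range (algebraMap F K) := by
  classical
  have hQ2 : 2 ≤ Q := hQ ▸ Fintype.one_lt_card
  set f : Polynomial K := Polynomial.X ^ Q - Polynomial.X with hf
  have hdeg : f.natDegree = Q := by
    rw [hf]
    compute_degree!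
    · rw [if_neg (by omega : ¬ (1 = Q))]
      simp
    · omega
  have hf0 : f ≠ 0 := by
    intro h
    rw [h, Polynomial.natDegree_zero] at hdeg
    omega
  set T : Finset K := Finset.univ.image (algebraMap F K) with hT
  set R : Finset K := Finset.univ.filter (fun y => y ^ Q = y) with hR
  have hTR : T ⊆ R := by
    intro y hy
    rw [hT, Finset.mem_image] at hy
    obtain ⟨z, _, rfl⟩ := hy
    rw [hR, Finset.mem_filter]
    refine ⟨Finset.mem_univ _, ?_⟩
    rw [← map_pow]
    congr 1
    rw [← hQ]
    exact FiniteField.pow_card z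
  have hcardT : T.card = Q := by
    rw [hT, Finset.card_image_of_injective _ (algebraMap F K).injective,
      Finset.card_univ, hQ]
  have hcardR : R.card ≤ Q := by
    have hsub : R ⊆ f.roots.toFinset := by
      intro y hy
      rw [hR, Finset.mem_filter] at hy
      rw [Multiset.mem_toFinset, Polynomial.mem_roots hf0]
      simp [Polynomial.IsRoot, hf, sub_eq_zero, hy.2]
    calc R.card ≤ f.roots.toFinset.card := Finset.card_le_card hsub
      _ ≤ Multiset.card f.roots := f.roots.toFinset_card_le
      _ ≤ f.natDegree := f.card_roots'
      _ = Q := hdeg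
  have hTReq : T = R := Finset.eq_of_subset_of_card_le hTR (by omega)
  have hxR : x ∈ R := by rw [hR, Finset.mem_filter]; exact ⟨Finset.mem_univ _, hx⟩
  rw [← hTReq, hT, Finset.mem_image] at hxR
  obtain ⟨z, _, hz⟩ := hxR
  exact ⟨z, hz⟩

/-- Coordinates with respect to `1, γ` are unique when `γ` is not in the image of `M`. -/
lemma coords_unique {M K : Type*} [Field M] [Field K] [Algebra M K] {γ : K}
    (hγ : γ ∉ Set.range (algebraMap M K)) {a b c d : M}
    (h : algebraMap M K a + algebraMap M K b * γ = algebraMap M K c + algebraMap M K d * γ) :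
    a = c ∧ b = d := by
  have hinj : Function.Injective (algebraMap M K) := (algebraMap M K).injective
  by_cases hbd : b = d
  · subst hbd
    refine ⟨hinj ?_, rfl⟩
    have := add_right_cancel h
    exact this
  · exfalso
    apply hγ
    refine ⟨(a - c) / (d - b), ?_⟩
    have hdb : algebraMap M K d - algebraMap M K b ≠ 0 := by
      rw [sub_ne_zero]
      intro h'
      exact hbd (hinj h').symm
    rw [map_div₀, map_sub, map_sub]
    field_simp
    linear_combination h

/-- Two pairs with equal sum and product coincide. -/
lemma pair_eq_of_sum_prod {R : Type*} [Field R] {x y x' y' : R}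
    (hs : x + y = x' + y') (hp : x * y = x' * y') :
    (x = x' ∧ y = y') ∨ (x = y' ∧ y = x') := by
  have key : (x - x') * (x - y') = 0 := by linear_combination x * hs - hp
  rcases mul_eq_zero.mp key with h | h
  · left
    have hx : x = x' := sub_eq_zero.mp h
    exact ⟨hx, by linear_combination hs - hx⟩
  · right
    have hx : x = y' := sub_eq_zero.mp h
    exact ⟨hx, by linear_combination hs - hx⟩

/-- (Roth–Raviv–Tamo) For every `m ≥ 1` and prime power `q ≥ 3`, with
`F = F_q ⊆ M = F_{q^m} ⊆ K = F_{q^{2m}}`, there is `γ ∈ K` such that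
`S = {u + u^q·γ : u ∈ M}` is an `m`-dimensional Sidon space over `F` in `K`. -/
theorem exists_sidon_space (q m : ℕ) (hm : 1 ≤ m) (hq3 : 3 ≤ q) (hq : IsPrimePow q)
    (F M K : Type*) [Field F] [Field M] [Field K]
    [Fintype F] [Fintype M] [Fintype K]
    [Algebra F M] [Algebra M K] [Algebra F K] [IsScalarTower F M K]
    (hcF : Fintype.card F = q) (hcM : Fintype.card M = q ^ m)
    (hcK : Fintype.card K = q ^ (2 * m)) :
    ∃ γ : K,
      IsSidonSpace F (Submodule.span F
        (Set.range fun u : M => algebraMap M K u + algebraMap M K (u ^ q) * γ)) ∧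
      Module.finrank F (Submodule.span F
        (Set.range fun u : M => algebraMap M K u + algebraMap M K (u ^ q) * γ)) = m := by
  classical
  obtain ⟨p, e, hpp, he, hpe⟩ := hq
  have hp : p.Prime := Nat.prime_iff.mpr hpp
  haveI : Fact p.Prime := ⟨hp⟩
  -- basic numerics
  have hq1 : 1 ≤ q := by omega
  have hqm1 : 3 ≤ q ^ m := le_trans hq3 (Nat.le_self_pow (by omega) q)
  have h2m : q ^ (2 * m) = q ^ m * q ^ m := by rw [two_mul, pow_add]
  have hq2m : q ^ m < q ^ (2 * m) := by
    rw [h2m]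
    calc q ^ m = q ^ m * 1 := (mul_one _).symm
      _ < q ^ m * q ^ m := by
          apply Nat.mul_lt_mul_of_pos_left <;> omega
  -- characteristic
  have hcharM : CharP M p := by
    haveI := ringChar.charP M
    have hr : (ringChar M).Prime := CharP.char_is_prime M (ringChar M)
    obtain ⟨n, -, hcard⟩ := FiniteField.card M (ringChar M)
    rw [hcM, ← hpe, ← pow_mul] at hcard
    have hpdvd : p ∣ ringChar M ^ (n : ℕ) := by
      rw [← hcard]
      exact dvd_pow_self p (by positivity)
    have : p = ringChar M := (Nat.prime_dvd_prime_iff_eq hp hr).mp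
      (hpp.dvd_of_dvd_pow hpdvd)
    rw [this]
    exact ringChar.charP M
  have hcharK : CharP K p := by
    haveI := ringChar.charP K
    have hr : (ringChar K).Prime := CharP.char_is_prime K (ringChar K)
    obtain ⟨n, -, hcard⟩ := FiniteField.card K (ringChar K)
    rw [hcK, ← hpe, ← pow_mul] at hcard
    have hpdvd : p ∣ ringChar K ^ (n : ℕ) := by
      rw [← hcard]
      exact dvd_pow_self p (by positivity)
    have : p = ringChar K := (Nat.prime_dvd_prime_iff_eq hp hr).mp
      (hpp.dvd_of_dvd_pow hpdvd)
    rw [this]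
    exact ringChar.charP K
  haveI := hcharM
  haveI := hcharK
  -- Frobenius maps
  set frM : M →+* M := iterateFrobenius M p e with hfrMdef
  have hfrM : ∀ x : M, frM x = x ^ q := by
    intro x
    rw [hfrMdef, iterateFrobenius_def, hpe]
  set frK : K →+* K := iterateFrobenius K p (e * m) with hfrKdef
  have hfrK : ∀ x : K, frK x = x ^ (q ^ m) := by
    intro x
    rw [hfrKdef, iterateFrobenius_def, pow_mul, hpe]
  -- the generator
  obtain ⟨g, hg⟩ := IsCyclic.exists_generator (α := Kˣ)
  set γ : K := (g : K) with hγdef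
  have horder : orderOf g = q ^ (2 * m) - 1 := by
    rw [orderOf_eq_card_of_forall_mem_zpowers hg, Nat.card_eq_fintype_card,
      Fintype.card_units, hcK]
  have hγ0 : γ ≠ 0 := Units.ne_zero g
  -- γ is not in the image of M
  have hγM : γ ∉ Set.range (algebraMap M K) := by
    rintro ⟨x, hx⟩
    have hfix : γ ^ (q ^ m) = γ := by
      rw [← hx, ← map_pow]
      congr 1
      rw [← hcM]
      exact FiniteField.pow_card x
    have hg1 : g ^ (q ^ m - 1) = 1 := by
      have : g ^ (q ^ m) = g := Units.ext (by
        rw [Units.val_pow_eq_pow_val]; exact hfix)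
      have h2 : g ^ (q ^ m - 1) * g = g := by
        rw [← pow_succ]
        have : q ^ m - 1 + 1 = q ^ m := by omega
        rw [this]
        exact Units.ext (by rw [Units.val_pow_eq_pow_val]; exact hfix)
      exact mul_right_cancel (h2.trans (one_mul g).symm)
    have hdvd : orderOf g ∣ q ^ m - 1 := orderOf_dvd_of_pow_eq_one hg1
    rw [horder] at hdvd
    have := Nat.le_of_dvd (by omega) hdvd
    omega
  -- γ^(q^m+1) is not a (q-1)-st power from M
  have hγpow : ∀ w : M, w ≠ 0 → γ ^ (q ^ m + 1) ≠ (algebraMap M K w) ^ (q - 1) := by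
    intro w hw0 hcontra
    have hwfix : w ^ (q ^ m - 1) = 1 := by
      have h1 : w * w ^ (q ^ m - 1) = w * 1 := by
        rw [mul_one, ← pow_succ']
        have : q ^ m - 1 + 1 = q ^ m := by omega
        rw [this, ← hcM]
        exact FiniteField.pow_card w
      exact mul_left_cancel₀ hw0 h1
    have hdvdq : (q - 1) ∣ (q ^ m - 1) := by
      simpa using Nat.sub_dvd_pow_sub_pow q 1 m
    set h : ℕ := (q ^ m - 1) / (q - 1) with hhdef
    have hh : (q - 1) * h = q ^ m - 1 := Nat.mul_div_cancel' hdvdq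
    have hγ1 : γ ^ ((q ^ m + 1) * h) = 1 := by
      rw [pow_mul, hcontra, ← pow_mul, hh, ← map_pow, hwfix, map_one]
    have hgu : g ^ ((q ^ m + 1) * h) = 1 :=
      Units.ext (by rw [Units.val_pow_eq_pow_val, Units.val_one]; exact hγ1)
    have hdvd : q ^ (2 * m) - 1 ∣ (q ^ m + 1) * h := by
      rw [← horder]
      exact orderOf_dvd_of_pow_eq_one hgu
    have hkey : ((q ^ m + 1) * h) * (q - 1) = q ^ (2 * m) - 1 := by
      rw [mul_assoc, mul_comm h (q - 1), hh, h2m]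
      obtain ⟨b, hb⟩ : ∃ b, q ^ m = b + 1 := ⟨q ^ m - 1, by omega⟩
      rw [hb]
      have : (b + 1 + 1) * (b + 1 - 1) = (b + 1) * (b + 1) - 1 := by
        simp only [Nat.add_sub_cancel]
        apply Nat.eq_sub_of_add_eq
        ring
      exact this
    have hhpos : 0 < h := by
      rcases Nat.eq_zero_or_pos h with h0 | h0
      · rw [h0, mul_zero] at hh; omega
      · exact h0
    have htpos : 0 < (q ^ m + 1) * h := by positivity
    have hle : q ^ (2 * m) - 1 ≤ (q ^ m + 1) * h := Nat.le_of_dvd htpos hdvd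
    have h2t : (q ^ m + 1) * h * 2 ≤ (q ^ m + 1) * h * (q - 1) :=
      Nat.mul_le_mul_left _ (by omega)
    omega
  -- θ and δ : coordinates of γ² over M
  have hΓKfix : γ ^ (q ^ (2 * m)) = γ := by rw [← hcK]; exact FiniteField.pow_card γ
  have hΓ2 : (γ ^ (q ^ m)) ^ (q ^ m) = γ := by
    rw [← pow_mul, ← h2m]; exact hΓKfix
  have hθmem : (γ ^ (q ^ m) + γ) ∈ Set.range (algebraMap M K) := by
    apply mem_range_of_pow_card_eq hcM
    have h' : (γ ^ (q ^ m) + γ) ^ (q ^ m) = frK (γ ^ (q ^ m) + γ) := (hfrK _).symm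
    rw [h', map_add, hfrK, hfrK, hΓ2]
    ring
  have hδmem : (-(γ ^ (q ^ m) * γ)) ∈ Set.range (algebraMap M K) := by
    apply mem_range_of_pow_card_eq hcM
    have h' : (-(γ ^ (q ^ m) * γ)) ^ (q ^ m) = frK (-(γ ^ (q ^ m) * γ)) := (hfrK _).symm
    rw [h', map_neg, map_mul, hfrK, hfrK, hΓ2]
    ring
  obtain ⟨θ', hθ'⟩ := hθmem
  obtain ⟨δ', hδ'⟩ := hδmem
  have hγsq : γ ^ 2 = algebraMap M K θ' * γ + algebraMap M K δ' := by
    rw [hθ', hδ']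
    ring
  have hδK : - algebraMap M K δ' = γ ^ (q ^ m + 1) := by
    rw [hδ', neg_neg, pow_succ]
  -- the linear map φ
  have hpowF : ∀ (μ : F), (algebraMap F M μ) ^ q = algebraMap F M μ := by
    intro μ
    rw [← map_pow]
    congr 1
    rw [← hcF]
    exact FiniteField.pow_card μ
  let φ : M →ₗ[F] K :=
    { toFun := fun u => algebraMap M K u + algebraMap M K (u ^ q) * γ
      map_add' := by
        intro u v
        have hq' : (u + v) ^ q = u ^ q + v ^ q := by
          rw [← hfrM, ← hfrM, ← hfrM, map_add]
        rw [hq', map_add, map_add]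
        ring
      map_smul' := by
        intro μ u
        simp only [Algebra.smul_def, RingHom.id_apply]
        have hq' : (algebraMap F M μ * u) ^ q = algebraMap F M μ * u ^ q := by
          rw [mul_pow, hpowF]
        rw [hq', map_mul, map_mul, IsScalarTower.algebraMap_apply F M K μ]
        ring }
  have hφ : ∀ u : M, φ u = algebraMap M K u + algebraMap M K (u ^ q) * γ := fun u => rfl
  have hrange : Submodule.span F
      (Set.range fun u : M => algebraMap M K u + algebraMap M K (u ^ q) * γ)
      = LinearMap.range φ := by
    have hset : (Set.range fun u : M => algebraMap M K u + algebraMap M K (u ^ q) * γ)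
        = Set.range φ := rfl
    rw [hset, ← LinearMap.coe_range, Submodule.span_eq]
  have hφ0 : ∀ u : M, φ u = 0 → u = 0 := by
    intro u hu
    by_contra hu0
    apply hγM
    have hUq : algebraMap M K (u ^ q) ≠ 0 := by
      simp only [ne_eq, map_eq_zero]
      exact pow_ne_zero _ hu0
    refine ⟨-u / u ^ q, ?_⟩
    rw [map_div₀, map_neg]
    rw [hφ] at hu
    rw [div_eq_iff hUq]
    linear_combination -hu
  have hφinj : Function.Injective φ := by
    intro u v huv
    have h' : φ (u - v) = 0 := by rw [map_sub, huv, sub_self]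
    exact sub_eq_zero.mp (hφ0 _ h')
  have hfinrank : Module.finrank F ↥(LinearMap.range φ) = m := by
    rw [LinearMap.finrank_range_of_inj hφinj]
    have hcard := Module.card_eq_pow_finrank (K := F) (V := M)
    rw [hcF, hcM] at hcard
    exact (Nat.pow_right_injective (by omega) hcard).symm
  -- scalar extraction
  have hscal : ∀ x y : M, x ≠ 0 → y ≠ 0 → x ^ (q - 1) = y ^ (q - 1) →
      ∃ μ : F, μ ≠ 0 ∧ x = algebraMap F M μ * y := by
    intro x y hx hy hxy
    have hy1 : y ^ (q - 1) ≠ 0 := pow_ne_zero _ hy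
    have hl : (x / y) ^ q = x / y := by
      have h1 : (x / y) ^ (q - 1) = 1 := by
        rw [div_pow, hxy, div_self hy1]
      have h2 : (x / y) ^ q = (x / y) ^ (q - 1) * (x / y) := by
        rw [← pow_succ]
        congr 1
        omega
      rw [h2, h1, one_mul]
    obtain ⟨μ, hμ⟩ := mem_range_of_pow_card_eq hcF hl
    refine ⟨μ, ?_, ?_⟩
    · intro h0
      rw [h0, map_zero] at hμ
      rcases div_eq_zero_iff.mp hμ.symm with h | h
      · exact hx h
      · exact hy h
    · rw [hμ]
      field_simp
  have hspan : ∀ (x y : M), (∃ μ : F, μ ≠ 0 ∧ x = algebraMap F M μ * y) →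
      Submodule.span F {φ x} = Submodule.span F {φ y} := by
    rintro x y ⟨μ, hμ0, rfl⟩
    have h' : algebraMap F M μ * y = μ • y := (Algebra.smul_def μ y).symm
    rw [h', map_smul]
    exact Submodule.span_singleton_smul_eq (isUnit_iff_ne_zero.mpr hμ0) _
  -- product expansion
  have hprod : ∀ u v : M, (φ u) * (φ v)
      = algebraMap M K (u * v + u ^ q * v ^ q * δ')
        + algebraMap M K (u * v ^ q + u ^ q * v + u ^ q * v ^ q * θ') * γ := by
    intro u v
    rw [hφ, hφ]
    simp only [map_add, map_mul]
    linear_combination algebraMap M K (u ^ q) * algebraMap M K (v ^ q) * hγsq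
  refine ⟨γ, ?_, by rw [hrange]; exact hfinrank⟩
  intro a b c d ha hb hc hd ha0 hb0 hc0 hd0 hab
  rw [hrange] at ha hb hc hd
  obtain ⟨u, rfl⟩ := LinearMap.mem_range.mp ha
  obtain ⟨v, rfl⟩ := LinearMap.mem_range.mp hb
  obtain ⟨s, rfl⟩ := LinearMap.mem_range.mp hc
  obtain ⟨t, rfl⟩ := LinearMap.mem_range.mp hd
  have hu0 : u ≠ 0 := fun h => ha0 (by rw [h, map_zero])
  have hv0 : v ≠ 0 := fun h => hb0 (by rw [h, map_zero])
  have hs0 : s ≠ 0 := fun h => hc0 (by rw [h, map_zero])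
  have ht0 : t ≠ 0 := fun h => hd0 (by rw [h, map_zero])
  rw [hprod u v, hprod s t] at hab
  obtain ⟨h1eq, h2eq⟩ := coords_unique hγM hab
  -- Step A : u v = s t
  have huv : u * v = s * t := by
    by_contra hne
    have hw0 : u * v - s * t ≠ 0 := sub_ne_zero.mpr hne
    set w : M := u * v - s * t with hwdef
    have hwq : w = -δ' * w ^ q := by
      have hwq' : w ^ q = (u * v) ^ q - (s * t) ^ q := by
        rw [← hfrM, ← hfrM, ← hfrM, map_sub]
      rw [hwq']
      simp only [mul_pow]
      rw [hwdef]
      linear_combination h1eq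
    set W : K := algebraMap M K w with hWdef
    have hW0 : W ≠ 0 := by simp [hWdef, hw0]
    have hWq : W = γ ^ (q ^ m + 1) * W ^ q := by
      rw [hWdef, ← map_pow]
      nth_rewrite 1 [hwq]
      rw [map_mul, map_neg, hδK]
    have hWq0 : W ^ q ≠ 0 := pow_ne_zero _ hW0
    have hq1' : q - 1 + 1 = q := by omega
    have h2 : (W⁻¹) ^ (q - 1) * W ^ q = W := by
      have h3 : W ^ q = W ^ (q - 1) * W := by rw [← pow_succ, hq1']
      rw [h3, inv_pow, ← mul_assoc, inv_mul_cancel₀ (pow_ne_zero _ hW0), one_mul]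
    have hfinal : γ ^ (q ^ m + 1) = (algebraMap M K w⁻¹) ^ (q - 1) := by
      rw [map_inv₀]
      apply mul_right_cancel₀ hWq0
      rw [← hWq, h2]
    exact hγpow w⁻¹ (inv_ne_zero hw0) hfinal
  -- Step B : equal sums and products of (q-1)-st powers
  have hqq : u ^ q * v ^ q = s ^ q * t ^ q := by
    rw [← mul_pow, ← mul_pow, huv]
  have hsum' : u * v ^ q + u ^ q * v = s * t ^ q + s ^ q * t := by
    linear_combination h2eq - θ' * hqq
  have huv0 : u * v ≠ 0 := mul_ne_zero hu0 hv0
  have hq1' : q - 1 + 1 = q := by omega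
  have e1 : ∀ (k : ℕ) (x y : M),
      (x * y) * (x ^ k + y ^ k) = x ^ (k + 1) * y + x * y ^ (k + 1) := by
    intro k x y
    ring
  have hsum : u ^ (q - 1) + v ^ (q - 1) = s ^ (q - 1) + t ^ (q - 1) := by
    apply mul_left_cancel₀ huv0
    have h1 := e1 (q - 1) u v
    have h2 := e1 (q - 1) s t
    rw [hq1'] at h1 h2
    rw [h1, huv, h2]
    linear_combination hsum'
  have hprodpow : u ^ (q - 1) * v ^ (q - 1) = s ^ (q - 1) * t ^ (q - 1) := by
    rw [← mul_pow, ← mul_pow, huv]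
  rcases pair_eq_of_sum_prod hsum hprodpow with ⟨hus, hvt⟩ | ⟨hut, hvs⟩
  · rw [hspan u s (hscal u s hu0 hs0 hus), hspan v t (hscal v t hv0 ht0 hvt)]
  · rw [hspan u t (hscal u t hu0 ht0 hut), hspan v s (hscal v s hv0 hs0 hvs),
      Set.pair_comm]
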